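/- Let (σ^z_j)_{j=1}^N be the Pauli-Z operators on (ℂ²)^{⊗N}, let J_j ∈ ℝ, and define H = ∑_{j=2}^N J_j σ^z_1 σ^z_j. Let A = σ⁺_1 and B = ⊗_{j=2}^N σ⁺_j, and let ψ = (|0⟩^{⊗N} + |1⟩^{⊗N})/√2 (the GHZ state). Then ⟨ψ, [e^{iHt} A e^{−iHt}, B] ψ⟩ = (i/2)(e^{2it∑_j J_j} − e^{−2it∑_j J_j})·(phase), and in particular |⟨ψ, [A(t), B] ψ⟩| = |sin(2t ∑_{j=2}^N J_j)|. -/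

import Mathlib

theorem stmt10 (N : ℕ) (hN : 2 ≤ N) (J : Fin N → ℝ) (t : ℝ)
    (i₀ : Fin N) (hi₀ : (i₀ : ℕ) = 0)
    (Z : Fin N → Matrix (Fin N → Fin 2) (Fin N → Fin 2) ℂ)
    (hZ : ∀ j, Z j = Matrix.diagonal fun s => if s j = 0 then 1 else -1)
    (H : Matrix (Fin N → Fin 2) (Fin N → Fin 2) ℂ)
    (hH : H = ∑ j ∈ Finset.univ.filter (· ≠ i₀), (J j : ℂ) • (Z i₀ * Z j))
    (A B : Matrix (Fin N → Fin 2) (Fin N → Fin 2) ℂ)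
    (hA : ∀ s u, A s u =
      if s i₀ = 0 ∧ u i₀ = 1 ∧ (∀ k, k ≠ i₀ → s k = u k) then 1 else 0)
    (hB : ∀ s u, B s u =
      if (∀ j, j ≠ i₀ → s j = 0 ∧ u j = 1) ∧ s i₀ = u i₀ then 1 else 0)
    (ψ : (Fin N → Fin 2) → ℂ)
    (hψ : ψ = fun s =>
      if (∀ k, s k = 0) ∨ (∀ k, s k = 1) then ((1 / Real.sqrt 2 : ℝ) : ℂ) else 0)
    (At : Matrix (Fin N → Fin 2) (Fin N → Fin 2) ℂ)
    (hAt : At = NormedSpace.exp ((Complex.I * t) • H) * A *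
      NormedSpace.exp ((-(Complex.I * t)) • H)) :
    ‖dotProduct (star ψ) ((At * B - B * At).mulVec ψ)‖ =
      |Real.sin (2 * t * ∑ j ∈ Finset.univ.filter (· ≠ i₀), J j)| := by
  classical
  -- a site different from i₀
  have hj₁ : ∃ j : Fin N, j ≠ i₀ := by
    refine ⟨⟨1, lt_of_lt_of_le one_lt_two hN⟩, ?_⟩
    intro h
    have := congrArg (Fin.val) h
    simp [hi₀] at this
  obtain ⟨j₁, hj₁⟩ := hj₁
  -- diagonal form of H
  set d : (Fin N → Fin 2) → ℂ := fun s => ∑ j ∈ Finset.univ.filter (· ≠ i₀),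
    (J j : ℂ) * ((if s i₀ = 0 then (1:ℂ) else -1) * (if s j = 0 then 1 else -1)) with hd
  have hHd : H = Matrix.diagonal d := by
    rw [hH]
    ext s u
    by_cases h : s = u
    · subst h
      simp [hZ, Matrix.sum_apply, Matrix.diagonal_mul_diagonal, Matrix.diagonal_apply_eq, hd,
        smul_eq_mul]
    · simp [hZ, Matrix.sum_apply, Matrix.diagonal_mul_diagonal, Matrix.diagonal_apply_ne _ h, h]
  have hexp : ∀ c : ℂ, NormedSpace.exp (c • H) =
      Matrix.diagonal (fun s => Complex.exp (c * d s)) := by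
    intro c
    rw [hHd, ← Matrix.diagonal_smul, Matrix.exp_diagonal]
    funext s
    rw [Pi.exp_def]
    simp [← Complex.exp_eq_exp_ℂ, smul_eq_mul]
  have hAt' : ∀ s u, At s u =
      Complex.exp (Complex.I * t * d s) * A s u * Complex.exp (-(Complex.I * t) * d u) := by
    intro s u
    rw [hAt, hexp, hexp, Matrix.mul_diagonal, Matrix.diagonal_mul]
  -- the four relevant basis states
  set z : Fin N → Fin 2 := fun _ => 0 with hz
  set o : Fin N → Fin 2 := fun _ => 1 with ho
  set p : Fin N → Fin 2 := fun k => if k = i₀ then 1 else 0 with hp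
  set q : Fin N → Fin 2 := fun k => if k = i₀ then 0 else 1 with hq
  set Sc : ℂ := ∑ j ∈ Finset.univ.filter (· ≠ i₀), (J j : ℂ) with hSc
  have hdz : d z = Sc := by simp [hd, hSc, hz]
  have hdo : d o = Sc := by simp [hd, hSc, ho]
  have hdp : d p = -Sc := by
    simp only [hd, hp, hSc]
    rw [← Finset.sum_neg_distrib]
    refine Finset.sum_congr rfl ?_
    intro j hj
    have hjne : j ≠ i₀ := (Finset.mem_filter.mp hj).2
    simp [hjne]
  have hdq : d q = -Sc := by
    simp only [hd, hq, hSc]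
    rw [← Finset.sum_neg_distrib]
    refine Finset.sum_congr rfl ?_
    intro j hj
    have hjne : j ≠ i₀ := (Finset.mem_filter.mp hj).2
    simp [hjne]
  set M : Matrix (Fin N → Fin 2) (Fin N → Fin 2) ℂ := At * B - B * At with hM
  -- entries of M at the four corners
  have hAoz : ∀ v u, At o v * B v u = 0 := by
    intro v u
    rw [hAt', hA]
    have : ¬ (o i₀ = 0 ∧ v i₀ = 1 ∧ ∀ k, k ≠ i₀ → o k = v k) := by
      rintro ⟨h1, -⟩; simp [ho] at h1
    simp [this]
  have hBo : ∀ v u, B o v * At v u = 0 := by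
    intro v u
    rw [hB]
    have : ¬ ((∀ j, j ≠ i₀ → o j = 0 ∧ v j = 1) ∧ o i₀ = v i₀) := by
      rintro ⟨h1, -⟩
      have := (h1 j₁ hj₁).1
      simp [ho] at this
    simp [this]
  have hMoz : M o z = 0 := by
    simp [hM, Matrix.sub_apply, Matrix.mul_apply, hAoz, hBo]
  have hMoo : M o o = 0 := by
    simp [hM, Matrix.sub_apply, Matrix.mul_apply, hAoz, hBo]
  have hMzz : M z z = 0 := by
    have h1 : ∀ v, At z v * B v z = 0 := by
      intro v
      rw [hB]
      have : ¬ ((∀ j, j ≠ i₀ → v j = 0 ∧ z j = 1) ∧ v i₀ = z i₀) := by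
        rintro ⟨h1, -⟩
        have := (h1 j₁ hj₁).2
        simp [hz] at this
      simp [this]
    have h2 : ∀ v, B z v * At v z = 0 := by
      intro v
      rw [hAt', hA]
      have : ¬ (v i₀ = 0 ∧ z i₀ = 1 ∧ ∀ k, k ≠ i₀ → v k = z k) := by
        rintro ⟨-, h1, -⟩; simp [hz] at h1
      simp [this]
    simp [hM, Matrix.sub_apply, Matrix.mul_apply, h1, h2]
  have hAtzp : At z p = Complex.exp (2 * (Complex.I * t) * Sc) := by
    rw [hAt', hA, hdz, hdp]
    have hcond : z i₀ = 0 ∧ p i₀ = 1 ∧ ∀ k, k ≠ i₀ → z k = p k := by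
      refine ⟨rfl, by simp [hp], fun k hk => by simp [hz, hp, hk]⟩
    rw [if_pos hcond, mul_one, ← Complex.exp_add]
    congr 1
    ring
  have hAtqo : At q o = Complex.exp (-(2 * (Complex.I * t) * Sc)) := by
    rw [hAt', hA, hdq, hdo]
    have hcond : q i₀ = 0 ∧ o i₀ = 1 ∧ ∀ k, k ≠ i₀ → q k = o k := by
      refine ⟨by simp [hq], rfl, fun k hk => by simp [hq, ho, hk]⟩
    rw [if_pos hcond, mul_one, ← Complex.exp_add]
    congr 1
    ring
  have hMzo : M z o = Complex.exp (2 * (Complex.I * t) * Sc)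
      - Complex.exp (-(2 * (Complex.I * t) * Sc)) := by
    have h1 : (At * B) z o = Complex.exp (2 * (Complex.I * t) * Sc) := by
      rw [Matrix.mul_apply]
      rw [Finset.sum_eq_single p]
      · have : B p o = 1 := by
          rw [hB]
          refine if_pos ⟨fun j hj => ⟨by simp [hp, hj], rfl⟩, by simp [hp, ho]⟩
        rw [this, hAtzp, mul_one]
      · intro v _ hv
        have : B v o = 0 := by
          rw [hB]
          refine if_neg ?_
          rintro ⟨h1, h2⟩
          apply hv
          funext k
          by_cases hk : k = i₀
          · subst hk; simpa [hp, ho] using h2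
          · simp [hp, hk, (h1 k hk).1]
        simp [this]
      · simp
    have h2 : (B * At) z o = Complex.exp (-(2 * (Complex.I * t) * Sc)) := by
      rw [Matrix.mul_apply]
      rw [Finset.sum_eq_single q]
      · have : B z q = 1 := by
          rw [hB]
          refine if_pos ⟨fun j hj => ⟨rfl, by simp [hq, hj]⟩, by simp [hq, hz]⟩
        rw [this, hAtqo, one_mul]
      · intro v _ hv
        have : B z v = 0 := by
          rw [hB]
          refine if_neg ?_
          rintro ⟨h1, h2⟩
          apply hv
          funext k
          by_cases hk : k = i₀
          · subst hk; simpa [hq, hz] using h2.symm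
          · simp [hq, hk, (h1 k hk).2]
        simp [this]
      · simp
    simp [hM, Matrix.sub_apply, h1, h2]
  -- decompose ψ
  set r : ℂ := ((1 / Real.sqrt 2 : ℝ) : ℂ) with hr
  have hzo : z ≠ o := by
    intro h
    have := congrFun h i₀
    simp [hz, ho] at this
  have hψ' : ψ = r • (Pi.single z 1 + Pi.single o 1) := by
    rw [hψ]
    funext s
    by_cases h0 : s = z
    · subst h0
      have : (∀ k, z k = 0) ∨ (∀ k, z k = 1) := Or.inl fun k => rfl
      simp [this, Pi.single_apply, hzo, hr]
    · by_cases h1 : s = o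
      · subst h1
        have : (∀ k, o k = 0) ∨ (∀ k, o k = 1) := Or.inr fun k => rfl
        simp [this, Pi.single_apply, Ne.symm hzo, hr]
      · have : ¬ ((∀ k, s k = 0) ∨ (∀ k, s k = 1)) := by
          rintro (h | h)
          · exact h0 (funext h)
          · exact h1 (funext h)
        simp [this, Pi.single_apply, h0, h1]
  have hstar : star ψ = r • (Pi.single z 1 + Pi.single o 1) := by
    have : star ψ = ψ := by
      rw [hψ]
      funext s
      simp only [Pi.star_apply]
      split <;> simp [hr, Complex.conj_ofReal]
    rw [this, hψ']
  have hval : dotProduct (star ψ) (M.mulVec ψ) =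
      r * r * (M z z + M z o + (M o z + M o o)) := by
    rw [hstar, hψ', Matrix.mulVec_smul, smul_dotProduct, dotProduct_smul]
    rw [Matrix.mulVec_add, Matrix.mulVec_single, Matrix.mulVec_single]
    rw [add_dotProduct, single_dotProduct, single_dotProduct]
    simp [smul_eq_mul]
    ring
  rw [hval, hMzz, hMzo, hMoz, hMoo]
  -- simplify the exponentials
  set θ : ℝ := 2 * t * ∑ j ∈ Finset.univ.filter (· ≠ i₀), J j with hθ
  have hScθ : 2 * (Complex.I * t) * Sc = (θ : ℂ) * Complex.I := by
    rw [hSc, hθ]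
    push_cast
    ring
  have hr2 : r * r = (1/2 : ℂ) := by
    have h2 : (1 / Real.sqrt 2) * (1 / Real.sqrt 2) = 1/2 := by
      rw [div_mul_div_comm, one_mul, Real.mul_self_sqrt (by norm_num)]
    rw [hr, ← Complex.ofReal_mul, h2]
    norm_num
  rw [hScθ, hr2]
  rw [← neg_mul, Complex.exp_mul_I, Complex.exp_mul_I, Complex.cos_neg, Complex.sin_neg]
  have : Complex.cos θ + Complex.sin θ * Complex.I -
      (Complex.cos θ + -Complex.sin θ * Complex.I) = 2 * Complex.sin θ * Complex.I := by ring
  rw [zero_add, add_zero, add_zero, this, ← Complex.ofReal_sin]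
  rw [show (1/2 : ℂ) * (2 * (Real.sin θ : ℂ) * Complex.I) = (Real.sin θ : ℂ) * Complex.I by ring]
  rw [norm_mul, Complex.norm_real, Complex.norm_I, mul_one, Real.norm_eq_abs]
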